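/- For an n-periodic pre-NSS datum M and i ∈ ℤ/nℤ, the affine operator f̂_i M = (∏_{k∈ℤ} f̃_{i+kn})(M) is well-defined and is given by the closed formula (f̂_i M)_γ = min over μ obtained from γ by removing i-colored boxes (color taken mod n) of ( M_μ + |γ∖μ|·(φ̂_i(M) − 1) ). -/

import Mathlib

open Classical

/-- A left-black Maya diagram: black = `true`, eventually black in the positive
direction and eventually white in the negative direction. -/
structure MayaDiagram where
  beads : ℤ → Bool
  black_up : ∃ N : ℤ, ∀ k : ℤ, N ≤ k → beads k = true
  white_down : ∃ N : ℤ, ∀ k : ℤ, k ≤ N → beads k = false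

/-- A right-black Maya diagram: eventually white in the positive direction and
eventually black in the negative direction. -/
structure RBMaya where
  beads : ℤ → Bool
  white_up : ∃ N : ℤ, ∀ k : ℤ, N ≤ k → beads k = false
  black_down : ∃ N : ℤ, ∀ k : ℤ, k ≤ N → beads k = true

/-- The predicate of being a left-black bead configuration. -/
def IsLB (g : ℤ → Bool) : Prop :=
  (∃ N : ℤ, ∀ k : ℤ, N ≤ k → g k = true) ∧ (∃ N : ℤ, ∀ k : ℤ, k ≤ N → g k = false)

/-- Invert the colors of a right-black Maya diagram outside the interval [a, b]. -/
def flipOutside (τ : RBMaya) (a b : ℤ) : ℤ → Bool :=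
  fun k => if a ≤ k ∧ k ≤ b then τ.beads k else !(τ.beads k)

/-- The pre-NSS condition: a ℤ-valued function M on left-black Maya diagrams such
that for every right-black Maya diagram τ, the values of M on the left-black
diagrams γ_I obtained by inverting the colors of τ outside an interval I
stabilize (to a constant Θ(M)_τ) for all sufficiently large intervals I. -/
def PreNSS (M : MayaDiagram → ℤ) : Prop :=
  ∀ τ : RBMaya, ∃ C : ℤ, ∃ a₀ b₀ : ℤ, ∀ a b : ℤ, a ≤ a₀ → b₀ ≤ b →
    ∀ h : IsLB (flipOutside τ a b), M ⟨flipOutside τ a b, h.1, h.2⟩ = C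

/-- The stabilized extension Θ(M) of a pre-NSS datum M to right-black Maya
diagrams. -/
noncomputable def Theta (M : MayaDiagram → ℤ) (τ : RBMaya) : ℤ :=
  if h : PreNSS M then Classical.choose (h τ) else 0

/-- The right-black Maya diagram Λ_i : black beads exactly in positions < i. -/
def Lam (i : ℤ) : RBMaya where
  beads := fun k => decide (k < i)
  white_up := ⟨i, fun k hk => by simp; omega⟩
  black_down := ⟨i - 1, fun k hk => by simp; omega⟩

/-- The right-black Maya diagram s_iΛ_i, obtained from Λ_i by swapping the colors
of the two beads adjacent to position i. -/
def sLam (i : ℤ) : RBMaya where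
  beads := fun k => decide (k < i - 1 ∨ k = i)
  white_up := ⟨i + 1, fun k hk => by simp; omega⟩
  black_down := ⟨i - 2, fun k hk => by simp; omega⟩

/-- `RemoveAt γ μ j` : μ is obtained from γ by removing one box labeled by the
integer j, i.e. by exchanging a black bead at position j with a white bead at
position j + 1. -/
def RemoveAt (γ μ : MayaDiagram) (j : ℤ) : Prop :=
  γ.beads j = true ∧ γ.beads (j + 1) = false ∧
    μ.beads = Function.update (Function.update γ.beads j false) (j + 1) true

/-- The constant c_i(M) = M_{Λ_i} − M_{s_iΛ_i} − 1. -/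
noncomputable def cnss (i : ℤ) (M : MayaDiagram → ℤ) : ℤ :=
  Theta M (Lam i) - Theta M (sLam i) - 1

/-- The A_∞ Kashiwara operator f̃_i on pre-NSS data:
(f̃_i M)_γ = min over μ obtained from γ by removing boxes labeled i of
( M_μ + |γ∖μ|·c_i(M) ); since at most one box labeled i can be removed, this is
a minimum over one or two values. -/
noncomputable def ftil (i : ℤ) (M : MayaDiagram → ℤ) : MayaDiagram → ℤ :=
  fun γ =>
    if h : ∃ μ : MayaDiagram, RemoveAt γ μ i then
      min (M γ) (M h.choose + cnss i M)
    else M γ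

/-- The shift operator on Maya diagrams (shift all positions by n). -/
def mayaShift (n : ℤ) (m : MayaDiagram) : MayaDiagram where
  beads := fun k => m.beads (k - n)
  black_up := by
    obtain ⟨N, hN⟩ := m.black_up
    exact ⟨N + n, fun k hk => hN _ (by omega)⟩
  white_down := by
    obtain ⟨N, hN⟩ := m.white_down
    exact ⟨N + n, fun k hk => hN _ (by omega)⟩

/-- n-periodicity of a pre-NSS datum. -/
def PeriodicNSS (n : ℤ) (M : MayaDiagram → ℤ) : Prop :=
  ∀ γ : MayaDiagram, M (mayaShift n γ) = M γ

/-- The j-th part of the partition underlying a Maya diagram. -/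
noncomputable def mayaPart (m : MayaDiagram) (j : ℕ) : ℕ :=
  Set.ncard {k : ℤ | m.beads k = true ∧
    j < Set.ncard {l : ℤ | m.beads l = false ∧ k < l}}

/-- The number of boxes of the partition underlying a Maya diagram. -/
noncomputable def mayaSize (m : MayaDiagram) : ℕ := ∑ᶠ j : ℕ, mayaPart m j

/-- One removal of a box whose label is congruent to i mod n. -/
def RemStep (n i : ℤ) (γ μ : MayaDiagram) : Prop :=
  ∃ j : ℤ, (j - i) % n = 0 ∧ RemoveAt γ μ j

/-- Apply the operators f̃_j for j running over a list. -/
noncomputable def applyAll (l : List ℤ) (M : MayaDiagram → ℤ) : MayaDiagram → ℤ :=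
  l.foldr (fun j N => ftil j N) M

/-- The entries ⟨ĥ_j, h_i⟩ of the affine Cartan matrix of ŝl_n, for integer
representatives j, i of residues mod n (for n = 2 the off-diagonal entry is −2). -/
def acart (n j i : ℤ) : ℤ :=
  2 * (if (j - i) % n = 0 then 1 else 0) - (if (j - i - 1) % n = 0 then 1 else 0)
    - (if (j - i + 1) % n = 0 then 1 else 0)

/-- ε̂_i(M) = −M_{Λ_i} − M_{s_iΛ_i} + M_{Λ_{i−1}} + M_{Λ_{i+1}}. -/
noncomputable def epshat (i : ℤ) (M : MayaDiagram → ℤ) : ℤ :=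
  -Theta M (Lam i) - Theta M (sLam i) + Theta M (Lam (i - 1)) + Theta M (Lam (i + 1))

/-- φ̂_i(M) = ⟨wt(M), h_i⟩ + ε̂_i(M), where wt(M) = Σ_j M_{Λ_j}·ĥ_j. -/
noncomputable def phihat (n i : ℤ) (M : MayaDiagram → ℤ) : ℤ :=
  (∑ j ∈ Finset.range n.toNat, Theta M (Lam (j : ℤ)) * acart n (j : ℤ) i) + epshat i M


section Aux

lemma md_ext {γ μ : MayaDiagram} (h : γ.beads = μ.beads) : γ = μ := by
  cases γ; cases μ; cases h; rfl

lemma rb_ext {σ τ : RBMaya} (h : σ.beads = τ.beads) : σ = τ := by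
  cases σ; cases τ; cases h; rfl

lemma flip_isLB (τ : RBMaya) (a b : ℤ) : IsLB (flipOutside τ a b) := by
  obtain ⟨N₁, hN₁⟩ := τ.white_up
  obtain ⟨N₀, hN₀⟩ := τ.black_down
  constructor
  · exact ⟨max N₁ (b+1), fun k hk => by
      simp only [flipOutside]
      rw [if_neg (by omega), hN₁ k (by omega)]; rfl⟩
  · exact ⟨min N₀ (a-1), fun k hk => by
      simp only [flipOutside]
      rw [if_neg (by omega), hN₀ k (by omega)]; rfl⟩

/-- The left-black diagram obtained by flipping τ outside [a,b]. -/
def Gam (τ : RBMaya) (a b : ℤ) : MayaDiagram :=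
  ⟨flipOutside τ a b, (flip_isLB τ a b).1, (flip_isLB τ a b).2⟩

lemma theta_spec {M : MayaDiagram → ℤ} (hM : PreNSS M) (τ : RBMaya) :
    ∃ a₀ b₀ : ℤ, ∀ a b : ℤ, a ≤ a₀ → b₀ ≤ b → M (Gam τ a b) = Theta M τ := by
  obtain ⟨a₀, b₀, h⟩ := Classical.choose_spec (hM τ)
  refine ⟨a₀, b₀, fun a b ha hb => ?_⟩
  have := h a b ha hb (flip_isLB τ a b)
  rw [Theta, dif_pos hM]
  exact this

lemma theta_unique {M : MayaDiagram → ℤ} (hM : PreNSS M) (τ : RBMaya) (C : ℤ)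
    (h : ∃ a₀ b₀ : ℤ, ∀ a b : ℤ, a ≤ a₀ → b₀ ≤ b → M (Gam τ a b) = C) :
    Theta M τ = C := by
  obtain ⟨a₀, b₀, h⟩ := h
  obtain ⟨a₁, b₁, h'⟩ := theta_spec hM τ
  rw [← h (min a₀ a₁) (max b₀ b₁) (by omega) (by omega),
      h' _ _ (by omega) (by omega)]

/-- Remove a box at j on the level of bead sequences. -/
def remB (j : ℤ) (g : ℤ → Bool) : ℤ → Bool :=
  Function.update (Function.update g j false) (j + 1) true

lemma remB_apply (j : ℤ) (g : ℤ → Bool) (k : ℤ) :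
    remB j g k = if k = j + 1 then true else if k = j then false else g k := by
  rw [remB, Function.update_apply, Function.update_apply]

lemma remB_isLB (j : ℤ) {g : ℤ → Bool} (hg : IsLB g) : IsLB (remB j g) := by
  obtain ⟨⟨N₁, hN₁⟩, ⟨N₀, hN₀⟩⟩ := hg
  constructor
  · exact ⟨max N₁ (j+2), fun k hk => by
      rw [remB_apply, if_neg (by omega), if_neg (by omega)]; exact hN₁ k (by omega)⟩
  · exact ⟨min N₀ (j-1), fun k hk => by
      rw [remB_apply, if_neg (by omega), if_neg (by omega)]; exact hN₀ k (by omega)⟩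

lemma removeAt_iff {γ : MayaDiagram} {j : ℤ} :
    (∃ μ, RemoveAt γ μ j) ↔ (γ.beads j = true ∧ γ.beads (j+1) = false) := by
  constructor
  · rintro ⟨μ, h⟩; exact ⟨h.1, h.2.1⟩
  · rintro ⟨h1, h2⟩
    exact ⟨⟨remB j γ.beads, (remB_isLB j ⟨γ.black_up, γ.white_down⟩).1,
      (remB_isLB j ⟨γ.black_up, γ.white_down⟩).2⟩, h1, h2, rfl⟩

lemma ftil_eq_of_rem {N : MayaDiagram → ℤ} {γ μ : MayaDiagram} {j : ℤ}
    (h : RemoveAt γ μ j) : ftil j N γ = min (N γ) (N μ + cnss j N) := by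
  have hex : ∃ μ, RemoveAt γ μ j := ⟨μ, h⟩
  simp only [ftil]
  rw [dif_pos hex]
  have : hex.choose = μ := md_ext (hex.choose_spec.2.2.trans h.2.2.symm)
  rw [this]

lemma ftil_eq_of_not {N : MayaDiagram → ℤ} {γ : MayaDiagram} {j : ℤ}
    (h : ¬(γ.beads j = true ∧ γ.beads (j+1) = false)) :
    ftil j N γ = N γ := by
  simp only [ftil]
  rw [dif_neg (fun hex => h (removeAt_iff.mp hex))]

/-- Remove a box at j on right-black Maya diagrams (total function). -/
def rbRem (j : ℤ) (τ : RBMaya) : RBMaya := by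
  refine ⟨remB j τ.beads, ?_, ?_⟩
  · obtain ⟨N₁, hN₁⟩ := τ.white_up
    exact ⟨max N₁ (j+2), fun k hk => by
      rw [remB_apply, if_neg (by omega), if_neg (by omega)]; exact hN₁ k (by omega)⟩
  · obtain ⟨N₀, hN₀⟩ := τ.black_down
    exact ⟨min N₀ (j-1), fun k hk => by
      rw [remB_apply, if_neg (by omega), if_neg (by omega)]; exact hN₀ k (by omega)⟩

lemma gam_beads (τ : RBMaya) (a b k : ℤ) (h1 : a ≤ k) (h2 : k ≤ b) :
    (Gam τ a b).beads k = τ.beads k := if_pos ⟨h1, h2⟩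

lemma remB_gam {τ : RBMaya} {j a b : ℤ} (ha : a ≤ j) (hb : j + 1 ≤ b) :
    remB j (flipOutside τ a b) = flipOutside (rbRem j τ) a b := by
  funext k
  rw [remB_apply]
  show _ = flipOutside (rbRem j τ) a b k
  simp only [flipOutside, rbRem, remB_apply]
  by_cases hk1 : k = j + 1
  · rw [if_pos hk1, if_pos (by omega : a ≤ k ∧ k ≤ b), if_pos hk1]
  · rw [if_neg hk1]
    by_cases hk2 : k = j
    · rw [if_pos hk2, if_pos (by omega : a ≤ k ∧ k ≤ b), if_neg hk1, if_pos hk2]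
    · rw [if_neg hk2]
      by_cases hk3 : a ≤ k ∧ k ≤ b
      · rw [if_pos hk3, if_pos hk3, if_neg hk1, if_neg hk2]
      · rw [if_neg hk3, if_neg hk3, if_neg hk1, if_neg hk2]

lemma ftil_preNSS {N : MayaDiagram → ℤ} (hN : PreNSS N) (j : ℤ) :
    PreNSS (ftil j N) ∧
    (∀ τ : RBMaya, ¬(τ.beads j = true ∧ τ.beads (j+1) = false) →
        Theta (ftil j N) τ = Theta N τ) ∧
    (∀ τ : RBMaya, τ.beads j = true → τ.beads (j+1) = false →
        Theta (ftil j N) τ = min (Theta N τ) (Theta N (rbRem j τ) + cnss j N)) := by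
  have key : ∀ τ : RBMaya, ∃ a₀ b₀ : ℤ, ∀ a b, a ≤ a₀ → b₀ ≤ b →
      ftil j N (Gam τ a b) =
        if τ.beads j = true ∧ τ.beads (j+1) = false
        then min (Theta N τ) (Theta N (rbRem j τ) + cnss j N) else Theta N τ := by
    intro τ
    obtain ⟨a₁, b₁, h₁⟩ := theta_spec hN τ
    obtain ⟨a₂, b₂, h₂⟩ := theta_spec hN (rbRem j τ)
    refine ⟨min (min a₁ a₂) j, max (max b₁ b₂) (j+1), fun a b ha hb => ?_⟩
    have haj : a ≤ j := by omega
    have hbj : j + 1 ≤ b := by omega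
    have hbeads : (Gam τ a b).beads j = τ.beads j := gam_beads τ a b j haj (by omega)
    have hbeads' : (Gam τ a b).beads (j+1) = τ.beads (j+1) :=
      gam_beads τ a b (j+1) (by omega) hbj
    by_cases hrem : τ.beads j = true ∧ τ.beads (j+1) = false
    · rw [if_pos hrem]
      have hra : RemoveAt (Gam τ a b) (Gam (rbRem j τ) a b) j :=
        ⟨hbeads.trans hrem.1, hbeads'.trans hrem.2, (remB_gam haj hbj).symm⟩
      rw [ftil_eq_of_rem hra, h₁ a b (by omega) (by omega), h₂ a b (by omega) (by omega)]
    · rw [if_neg hrem, ftil_eq_of_not (by rw [hbeads, hbeads']; exact hrem),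
        h₁ a b (by omega) (by omega)]
  have hpre : PreNSS (ftil j N) := by
    intro τ
    obtain ⟨a₀, b₀, h⟩ := key τ
    exact ⟨_, a₀, b₀, fun a b ha hb hLB => h a b ha hb⟩
  refine ⟨hpre, ?_, ?_⟩
  · intro τ hτ
    obtain ⟨a₀, b₀, h⟩ := key τ
    exact theta_unique hpre τ _ ⟨a₀, b₀, fun a b ha hb => (h a b ha hb).trans (if_neg hτ)⟩
  · intro τ h1 h2
    obtain ⟨a₀, b₀, h⟩ := key τ
    exact theta_unique hpre τ _
      ⟨a₀, b₀, fun a b ha hb => (h a b ha hb).trans (if_pos ⟨h1, h2⟩)⟩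

end Aux


section Aux2

/-- Remove boxes at all positions in R simultaneously. -/
def remAll (R : Finset ℤ) (g : ℤ → Bool) (k : ℤ) : Bool :=
  if k ∈ R then false else if k - 1 ∈ R then true else g k

lemma remAll_isLB (R : Finset ℤ) {g : ℤ → Bool} (hg : IsLB g) : IsLB (remAll R g) := by
  obtain ⟨⟨N₁, hN₁⟩, ⟨N₀, hN₀⟩⟩ := hg
  obtain ⟨u, hu⟩ := R.exists_le
  obtain ⟨v, hv⟩ := (R.image (fun x => -x)).exists_le
  have hlow : ∀ x ∈ R, -v ≤ x := fun x hx => by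
    have := hv (-x) (Finset.mem_image_of_mem _ hx); omega
  constructor
  · refine ⟨max N₁ (u+2), fun k hk => ?_⟩
    rw [remAll, if_neg (fun h => by have := hu k h; omega),
      if_neg (fun h => by have := hu (k-1) h; omega)]
    exact hN₁ k (by omega)
  · refine ⟨min N₀ (-v-1), fun k hk => ?_⟩
    rw [remAll, if_neg (fun h => by have := hlow k h; omega),
      if_neg (fun h => by have := hlow (k-1) h; omega)]
    exact hN₀ k (by omega)

/-- Remove boxes at all positions in R from a Maya diagram. -/
def mdRem (R : Finset ℤ) (γ : MayaDiagram) : MayaDiagram :=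
  ⟨remAll R γ.beads, (remAll_isLB R ⟨γ.black_up, γ.white_down⟩).1,
    (remAll_isLB R ⟨γ.black_up, γ.white_down⟩).2⟩

lemma mdRem_beads (R : Finset ℤ) (γ : MayaDiagram) (k : ℤ) :
    (mdRem R γ).beads k =
      if k ∈ R then false else if k - 1 ∈ R then true else γ.beads k := rfl

lemma mdRem_empty (γ : MayaDiagram) : mdRem ∅ γ = γ := by
  apply md_ext; funext k; rw [mdRem_beads]; simp

lemma remB_remAll {R : Finset ℤ} {j : ℤ} (hj : j ∉ R) (hj1 : j + 1 ∉ R)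
    (g : ℤ → Bool) :
    remB j (remAll R g) = remAll (insert j R) g := by
  funext k
  simp only [remB_apply, remAll, Finset.mem_insert]
  by_cases h1 : k = j + 1
  · subst h1
    rw [if_pos rfl, if_neg (by
      rintro (h | h)
      · omega
      · exact hj1 h), if_pos (Or.inl (by omega))]
  · rw [if_neg h1]
    by_cases h2 : k = j
    · subst h2
      rw [if_pos rfl, if_pos (Or.inl rfl)]
    · rw [if_neg h2]
      have e1 : (k = j ∨ k ∈ R) ↔ k ∈ R := by
        constructor
        · rintro (h | h)
          · exact absurd h h2
          · exact h
        · exact Or.inr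
      have e2 : (k - 1 = j ∨ k - 1 ∈ R) ↔ k - 1 ∈ R := by
        constructor
        · rintro (h | h)
          · omega
          · exact h
        · exact Or.inr
      rw [if_congr e1 rfl rfl, if_congr e2 rfl rfl]

lemma remAll_remAll_single {R : Finset ℤ} {a : ℤ} (ha : a ∉ R) (ha1 : a + 1 ∉ R)
    (ha2 : a - 1 ∉ R) (g : ℤ → Bool) :
    remAll R (remAll {a} g) = remAll (insert a R) g := by
  funext k
  simp only [remAll, Finset.mem_insert, Finset.mem_singleton]
  by_cases hkR : k ∈ R
  · rw [if_pos hkR, if_pos (Or.inr hkR)]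
  · rw [if_neg hkR]
    by_cases hk1R : k - 1 ∈ R
    · have hka : k ≠ a := by
        intro h; subst h; exact ha2 hk1R
      rw [if_pos hk1R, if_neg (by
        rintro (h | h)
        · exact hka h
        · exact hkR h), if_pos (Or.inr hk1R)]
    · rw [if_neg hk1R]
      by_cases hka : k = a
      · subst hka
        rw [if_pos rfl, if_pos (Or.inl rfl)]
      · rw [if_neg hka]
        by_cases hk1a : k - 1 = a
        · rw [if_pos hk1a, if_neg (by
            rintro (h | h)
            · exact hka h
            · exact hkR h), if_pos (Or.inl hk1a)]
        · rw [if_neg hk1a, if_neg (by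
            rintro (h | h)
            · exact hka h
            · exact hkR h), if_neg (by
            rintro (h | h)
            · exact hk1a h
            · exact hk1R h)]

/-- Shift on right-black Maya diagrams. -/
def rbShift (n : ℤ) (τ : RBMaya) : RBMaya where
  beads := fun k => τ.beads (k - n)
  white_up := ⟨τ.white_up.choose + n, fun k hk => τ.white_up.choose_spec _ (by omega)⟩
  black_down := ⟨τ.black_down.choose + n, fun k hk => τ.black_down.choose_spec _ (by omega)⟩

lemma gam_shift (τ : RBMaya) (nn a b : ℤ) :
    Gam (rbShift nn τ) a b = mayaShift nn (Gam τ (a - nn) (b - nn)) := by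
  apply md_ext; funext k
  show flipOutside (rbShift nn τ) a b k = flipOutside τ (a - nn) (b - nn) (k - nn)
  simp only [flipOutside, rbShift]
  by_cases h : a ≤ k ∧ k ≤ b
  · rw [if_pos h, if_pos (by omega)]
  · rw [if_neg h, if_neg (by omega)]

lemma theta_shift {M : MayaDiagram → ℤ} (hM : PreNSS M) {n : ℤ}
    (hper : PeriodicNSS n M) (τ : RBMaya) :
    Theta M (rbShift n τ) = Theta M τ := by
  obtain ⟨a₀, b₀, h⟩ := theta_spec hM τ
  refine theta_unique hM _ _ ⟨a₀ + n, b₀ + n, fun a b ha hb => ?_⟩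
  rw [gam_shift, hper, h (a - n) (b - n) (by omega) (by omega)]

lemma lam_shift (m nn : ℤ) : Lam (m + nn) = rbShift nn (Lam m) := by
  apply rb_ext; funext k
  show decide (k < m + nn) = decide (k - nn < m)
  simp only [decide_eq_decide]; omega

lemma slam_shift (m nn : ℤ) : sLam (m + nn) = rbShift nn (sLam m) := by
  apply rb_ext; funext k
  show decide (k < m + nn - 1 ∨ k = m + nn) = decide (k - nn < m - 1 ∨ k - nn = m)
  simp only [decide_eq_decide]; omega

lemma theta_lam_period {M : MayaDiagram → ℤ} {n : ℤ} (hM : PreNSS M)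
    (hper : PeriodicNSS n M) :
    ∀ (k m : ℤ), Theta M (Lam (m + k * n)) = Theta M (Lam m) := by
  intro k
  induction k using Int.induction_on with
  | zero => intro m; norm_num
  | succ p ih =>
    intro m
    have e : m + ((p : ℤ) + 1) * n = (m + (p : ℤ) * n) + n := by ring
    rw [e, lam_shift, theta_shift hM hper, ih]
  | pred p ih =>
    intro m
    have e : m + (-(p : ℤ) - 1) * n + n = m + (-(p : ℤ)) * n := by ring
    have h1 : Theta M (Lam (m + (-(p : ℤ)) * n)) = Theta M (Lam (m + (-(p : ℤ) - 1) * n)) := by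
      rw [← e, lam_shift, theta_shift hM hper]
    rw [← h1, ih]

lemma theta_slam_period {M : MayaDiagram → ℤ} {n : ℤ} (hM : PreNSS M)
    (hper : PeriodicNSS n M) :
    ∀ (k m : ℤ), Theta M (sLam (m + k * n)) = Theta M (sLam m) := by
  intro k
  induction k using Int.induction_on with
  | zero => intro m; norm_num
  | succ p ih =>
    intro m
    have e : m + ((p : ℤ) + 1) * n = (m + (p : ℤ) * n) + n := by ring
    rw [e, slam_shift, theta_shift hM hper, ih]
  | pred p ih =>
    intro m
    have e : m + (-(p : ℤ) - 1) * n + n = m + (-(p : ℤ)) * n := by ring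
    have h1 : Theta M (sLam (m + (-(p : ℤ)) * n)) = Theta M (sLam (m + (-(p : ℤ) - 1) * n)) := by
      rw [← e, slam_shift, theta_shift hM hper]
    rw [← h1, ih]

lemma emod_sub_decompose {n a i : ℤ} (h : (a - i) % n = 0) : ∃ k : ℤ, a = i + k * n := by
  obtain ⟨k, hk⟩ := Int.dvd_of_emod_eq_zero h
  have hk' : a - i = k * n := by rw [mul_comm] at hk; exact hk
  exact ⟨k, by linarith⟩

lemma theta_lam_mod {M : MayaDiagram → ℤ} {n a i : ℤ} (hM : PreNSS M)
    (hper : PeriodicNSS n M) (h : (a - i) % n = 0) :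
    Theta M (Lam a) = Theta M (Lam i) := by
  obtain ⟨k, hk⟩ := emod_sub_decompose h
  rw [hk, theta_lam_period hM hper]

lemma cnss_mod {M : MayaDiagram → ℤ} {n a i : ℤ} (hM : PreNSS M)
    (hper : PeriodicNSS n M) (h : (a - i) % n = 0) :
    cnss a M = cnss i M := by
  obtain ⟨k, hk⟩ := emod_sub_decompose h
  rw [cnss, cnss, hk, theta_lam_period hM hper, theta_slam_period hM hper]

lemma sum_pick {M : MayaDiagram → ℤ} {n : ℤ} (hM : PreNSS M)
    (hper : PeriodicNSS n M) (hn : 2 ≤ n) (t : ℤ) :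
    (∑ j ∈ Finset.range n.toNat, Theta M (Lam (j : ℤ)) *
      (if ((j : ℤ) - t) % n = 0 then 1 else 0)) = Theta M (Lam t) := by
  have hn0 : (0 : ℤ) < n := by omega
  set j₀ : ℕ := (t % n).toNat with hj₀
  have hmod1 : 0 ≤ t % n := Int.emod_nonneg t (by omega)
  have hmod2 : t % n < n := Int.emod_lt_of_pos t hn0
  have hj₀n : j₀ < n.toNat := by omega
  have hj₀val : (j₀ : ℤ) = t % n := by omega
  have hcond : ((j₀ : ℤ) - t) % n = 0 := by
    rw [hj₀val, Int.sub_emod, Int.emod_emod_of_dvd _ dvd_rfl, sub_self, Int.zero_emod]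
  rw [Finset.sum_eq_single j₀]
  · rw [if_pos hcond, mul_one]
    exact theta_lam_mod hM hper hcond
  · intro b hb hbne
    rw [if_neg, mul_zero]
    intro hcon
    have h1 : (b : ℤ) % n = t % n := Int.emod_eq_emod_iff_emod_sub_eq_zero.mpr hcon
    have h2 : (b : ℤ) % n = (b : ℤ) :=
      Int.emod_eq_of_lt (Int.natCast_nonneg b) (by
        have := Finset.mem_range.mp hb; omega)
    exact hbne (by omega)
  · intro h
    exact absurd (Finset.mem_range.mpr hj₀n) h

lemma cnss_phihat {M : MayaDiagram → ℤ} {n i : ℤ} (hM : PreNSS M)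
    (hper : PeriodicNSS n M) (hn : 2 ≤ n) :
    cnss i M = phihat n i M - 1 := by
  have e : ∀ j : ℤ, Theta M (Lam j) * acart n j i
      = 2 * (Theta M (Lam j) * (if (j - i) % n = 0 then 1 else 0))
        - Theta M (Lam j) * (if (j - (i+1)) % n = 0 then 1 else 0)
        - Theta M (Lam j) * (if (j - (i-1)) % n = 0 then 1 else 0) := by
    intro j
    rw [acart]
    have e1 : j - i - 1 = j - (i+1) := by ring
    have e2 : j - i + 1 = j - (i-1) := by ring
    rw [e1, e2]; ring
  have hs : ∑ j ∈ Finset.range n.toNat, Theta M (Lam (j:ℤ)) * acart n (j:ℤ) i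
      = ∑ j ∈ Finset.range n.toNat,
        (2 * (Theta M (Lam (j:ℤ)) * (if ((j:ℤ) - i) % n = 0 then 1 else 0))
        - Theta M (Lam (j:ℤ)) * (if ((j:ℤ) - (i+1)) % n = 0 then 1 else 0)
        - Theta M (Lam (j:ℤ)) * (if ((j:ℤ) - (i-1)) % n = 0 then 1 else 0)) :=
    Finset.sum_congr rfl (fun j _ => e (j:ℤ))
  rw [phihat, hs, Finset.sum_sub_distrib,
    Finset.sum_sub_distrib, ← Finset.mul_sum, sum_pick hM hper hn,
    sum_pick hM hper hn, sum_pick hM hper hn, epshat, cnss]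
  ring

end Aux2


section Size

def Wset (m : MayaDiagram) (k : ℤ) : Set ℤ := {l : ℤ | m.beads l = false ∧ k < l}

noncomputable def wct (m : MayaDiagram) (k : ℤ) : ℕ := (Wset m k).ncard

def Bset (m : MayaDiagram) (t : ℕ) : Set ℤ := {k : ℤ | m.beads k = true ∧ t < wct m k}

lemma wct_eqd (m : MayaDiagram) (k : ℤ) : wct m k = (Wset m k).ncard := rfl

lemma mayaPart_eq (m : MayaDiagram) (t : ℕ) : mayaPart m t = (Bset m t).ncard := rfl

lemma Wset_finite (m : MayaDiagram) (k : ℤ) : (Wset m k).Finite := by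
  obtain ⟨N₁, hN₁⟩ := m.black_up
  apply Set.Finite.subset (Set.finite_Ioo k N₁)
  rintro l ⟨hl, hkl⟩
  refine ⟨hkl, ?_⟩
  by_contra h
  push_neg at h
  rw [hN₁ l h] at hl
  cases hl

lemma Bset_finite (m : MayaDiagram) (t : ℕ) : (Bset m t).Finite := by
  obtain ⟨N₁, hN₁⟩ := m.black_up
  obtain ⟨N₀, hN₀⟩ := m.white_down
  apply Set.Finite.subset (Set.finite_Ioo N₀ N₁)
  rintro k ⟨hk, hcard⟩
  refine ⟨?_, ?_⟩
  · by_contra h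
    push_neg at h
    rw [hN₀ k h] at hk
    cases hk
  · have hne : (Wset m k).Nonempty := by
      apply Set.nonempty_of_ncard_ne_zero
      rw [← wct_eqd]
      omega
    obtain ⟨l, hl, hkl⟩ := hne
    have : l < N₁ := by
      by_contra h
      push_neg at h
      rw [hN₁ l h] at hl
      cases hl
    omega

lemma wct_succ {γ : MayaDiagram} {j : ℤ} (hw : γ.beads (j+1) = false) :
    wct γ j = wct γ (j+1) + 1 := by
  have hset : Wset γ j = insert (j+1) (Wset γ (j+1)) := by
    ext l
    simp only [Wset, Set.mem_setOf_eq, Set.mem_insert_iff]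
    constructor
    · rintro ⟨h1, h2⟩
      by_cases hl : l = j + 1
      · exact Or.inl hl
      · exact Or.inr ⟨h1, by omega⟩
    · rintro (rfl | ⟨h1, h2⟩)
      · exact ⟨hw, by omega⟩
      · exact ⟨h1, by omega⟩
  have hnin : (j+1) ∉ Wset γ (j+1) := fun hc => by
    rcases hc with ⟨_, h2⟩; omega
  rw [wct_eqd, wct_eqd, hset, Set.ncard_insert_of_notMem hnin (Wset_finite γ (j+1))]

lemma wct_rem_ne {γ μ : MayaDiagram} {j : ℤ} (h : RemoveAt γ μ j) {k : ℤ} (hk : k ≠ j) :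
    wct μ k = wct γ k := by
  obtain ⟨hb, hw, hμ⟩ := h
  have hμ' : ∀ l, μ.beads l = remB j γ.beads l := fun l => by rw [hμ]; rfl
  rcases lt_or_ge k j with hkj | hkj
  · have hset : Wset μ k = insert j (Wset γ k \ {j+1}) := by
      ext l
      simp only [Wset, Set.mem_setOf_eq, Set.mem_insert_iff, Set.mem_diff,
        Set.mem_singleton_iff]
      rw [hμ' l, remB_apply]
      constructor
      · rintro ⟨h1, h2⟩
        by_cases hl1 : l = j + 1
        · rw [if_pos hl1] at h1; cases h1
        · rw [if_neg hl1] at h1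
          by_cases hl2 : l = j
          · exact Or.inl hl2
          · rw [if_neg hl2] at h1
            exact Or.inr ⟨⟨h1, h2⟩, hl1⟩
      · rintro (rfl | ⟨⟨h1, h2⟩, h3⟩)
        · rw [if_neg (by omega), if_pos rfl]
          exact ⟨rfl, hkj⟩
        · have hl2 : l ≠ j := fun e => by rw [e, hb] at h1; cases h1
          rw [if_neg h3, if_neg hl2]
          exact ⟨h1, h2⟩
    have hjin : (j+1) ∈ Wset γ k := ⟨hw, by omega⟩
    have hjnin : j ∉ Wset γ k \ {j+1} := fun hc => by
      rcases hc with ⟨⟨hgj, _⟩, _⟩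
      rw [hb] at hgj
      cases hgj
    rw [wct_eqd, wct_eqd, hset,
      Set.ncard_insert_of_notMem hjnin ((Wset_finite γ k).diff (t := _)),
      Set.ncard_diff_singleton_add_one hjin (Wset_finite γ k)]
  · have hkj' : j + 1 ≤ k := by omega
    have hset : Wset μ k = Wset γ k := by
      ext l
      simp only [Wset, Set.mem_setOf_eq]
      rw [hμ' l, remB_apply]
      constructor
      · rintro ⟨h1, h2⟩
        rw [if_neg (by omega), if_neg (by omega)] at h1
        exact ⟨h1, h2⟩
      · rintro ⟨h1, h2⟩
        rw [if_neg (by omega), if_neg (by omega)]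
        exact ⟨h1, h2⟩
    rw [wct_eqd, wct_eqd, hset]

lemma removeAt_part {γ μ : MayaDiagram} {j : ℤ} (h : RemoveAt γ μ j) (t : ℕ) :
    mayaPart γ t = mayaPart μ t + (if t + 1 = wct γ j then 1 else 0) := by
  have hre := h
  obtain ⟨hb, hw, hμ⟩ := h
  have hμ' : ∀ l, μ.beads l = remB j γ.beads l := fun l => by rw [hμ]; rfl
  set w := wct γ j with hwdef
  have hwj : w = wct γ (j+1) + 1 := wct_succ hw
  have hμj1 : wct μ (j+1) = wct γ (j+1) := wct_rem_ne hre (by omega)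
  have hμbj1 : μ.beads (j+1) = true := by rw [hμ' (j+1), remB_apply, if_pos rfl]
  have hμbj : μ.beads j = false := by
    rw [hμ' j, remB_apply, if_neg (by omega), if_pos rfl]
  have hBset : Bset μ t =
      if t + 1 < w then insert (j+1) (Bset γ t \ {j}) else Bset γ t \ {j} := by
    ext k
    by_cases hc : t + 1 < w
    · rw [if_pos hc]
      simp only [Bset, Set.mem_setOf_eq, Set.mem_insert_iff, Set.mem_diff,
        Set.mem_singleton_iff]
      constructor
      · rintro ⟨hk1, hk2⟩
        by_cases hk : k = j + 1
        · exact Or.inl hk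
        · have hkj : k ≠ j := fun e => by rw [e, hμbj] at hk1; cases hk1
          refine Or.inr ⟨⟨?_, ?_⟩, hkj⟩
          · rw [hμ' k, remB_apply, if_neg hk, if_neg hkj] at hk1
            exact hk1
          · rw [wct_rem_ne hre hkj] at hk2
            exact hk2
      · rintro (rfl | ⟨⟨hk1, hk2⟩, hk3⟩)
        · refine ⟨hμbj1, ?_⟩
          rw [hμj1]
          omega
        · have hkj1 : k ≠ j + 1 := fun e => by rw [e, hw] at hk1; cases hk1
          refine ⟨?_, ?_⟩
          · rw [hμ' k, remB_apply, if_neg hkj1, if_neg hk3]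
            exact hk1
          · rw [wct_rem_ne hre hk3]
            exact hk2
    · rw [if_neg hc]
      simp only [Bset, Set.mem_setOf_eq, Set.mem_diff, Set.mem_singleton_iff]
      constructor
      · rintro ⟨hk1, hk2⟩
        have hkj : k ≠ j := fun e => by rw [e, hμbj] at hk1; cases hk1
        have hkj1 : k ≠ j + 1 := by
          intro e
          rw [e, hμj1] at hk2
          omega
        refine ⟨⟨?_, ?_⟩, hkj⟩
        · rw [hμ' k, remB_apply, if_neg hkj1, if_neg hkj] at hk1
          exact hk1
        · rw [wct_rem_ne hre hkj] at hk2
          exact hk2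
      · rintro ⟨⟨hk1, hk2⟩, hk3⟩
        have hkj1 : k ≠ j + 1 := fun e => by rw [e, hw] at hk1; cases hk1
        refine ⟨?_, ?_⟩
        · rw [hμ' k, remB_apply, if_neg hkj1, if_neg hk3]
          exact hk1
        · rw [wct_rem_ne hre hk3]
          exact hk2
  have hj1nB : (j+1) ∉ Bset γ t \ {j} := fun hc => by
    rcases hc with ⟨⟨h1, _⟩, _⟩
    rw [hw] at h1
    cases h1
  rw [mayaPart_eq, mayaPart_eq, hBset]
  by_cases hc : t + 1 < w
  · rw [if_pos hc, if_neg (by omega),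
      Set.ncard_insert_of_notMem hj1nB ((Bset_finite γ t).diff (t := _))]
    have hjB : j ∈ Bset γ t := ⟨hb, by omega⟩
    have := Set.ncard_diff_singleton_add_one hjB (Bset_finite γ t)
    omega
  · rw [if_neg hc]
    by_cases hc2 : t + 1 = w
    · rw [if_pos hc2]
      have hjB : j ∈ Bset γ t := ⟨hb, by omega⟩
      have := Set.ncard_diff_singleton_add_one hjB (Bset_finite γ t)
      omega
    · rw [if_neg hc2]
      have hjB : j ∉ Bset γ t := fun hc3 => by
        rcases hc3 with ⟨_, h2⟩
        omega
      rw [Set.diff_singleton_eq_self hjB]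
      omega

lemma mayaPart_bound (m : MayaDiagram) : ∃ Bd : ℕ, ∀ t, Bd ≤ t → mayaPart m t = 0 := by
  obtain ⟨N₁, hN₁⟩ := m.black_up
  obtain ⟨N₀, hN₀⟩ := m.white_down
  refine ⟨(Set.Ioo N₀ N₁).ncard, fun t ht => ?_⟩
  rw [mayaPart_eq]
  convert Set.ncard_empty ℤ
  rw [Set.eq_empty_iff_forall_notMem]
  rintro k ⟨hk1, hk2⟩
  have hsub : Wset m k ⊆ Set.Ioo N₀ N₁ := by
    rintro l ⟨hl1, hl2⟩
    refine ⟨?_, ?_⟩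
    · have : N₀ < k := by
        by_contra hcon
        push_neg at hcon
        rw [hN₀ k hcon] at hk1
        cases hk1
      omega
    · by_contra hcon
      push_neg at hcon
      rw [hN₁ l hcon] at hl1
      cases hl1
  have h2 := Set.ncard_le_ncard hsub (Set.finite_Ioo N₀ N₁)
  rw [wct_eqd] at hk2
  omega

lemma removeAt_size {γ μ : MayaDiagram} {j : ℤ} (h : RemoveAt γ μ j) :
    mayaSize γ = mayaSize μ + 1 := by
  obtain ⟨Bd, hBd⟩ := mayaPart_bound μ
  set w := wct γ j with hwdef
  have hw1 : 1 ≤ w := by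
    have := wct_succ h.2.1
    omega
  have hpart := removeAt_part h
  rw [mayaSize, mayaSize]
  have hsup1 : (Function.support (mayaPart μ)).Finite :=
    Set.Finite.subset (Set.finite_Iio Bd) (fun t ht => by
      simp only [Function.mem_support] at ht
      simp only [Set.mem_Iio]
      by_contra hcon
      push_neg at hcon
      exact ht (hBd t hcon))
  have hsup2 : (Function.support (fun t : ℕ => if t + 1 = w then 1 else 0)).Finite :=
    Set.Finite.subset (Set.finite_singleton (w - 1)) (fun t ht => by
      simp only [Function.mem_support] at ht
      simp only [Set.mem_singleton_iff]
      by_contra hcon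
      exact ht (if_neg (fun e => hcon (by omega))))
  calc ∑ᶠ t, mayaPart γ t
      = ∑ᶠ t : ℕ, (mayaPart μ t + if t + 1 = w then 1 else 0) := finsum_congr hpart
    _ = (∑ᶠ t, mayaPart μ t) + ∑ᶠ t : ℕ, (if t + 1 = w then 1 else 0) :=
        finsum_add_distrib hsup1 hsup2
    _ = (∑ᶠ t, mayaPart μ t) + 1 := by
        congr 1
        rw [finsum_eq_single _ (w - 1) (fun x hx => if_neg (fun e => hx (by omega))),
          if_pos (by omega)]

end Size


section Main

lemma mod_sub {n p a i : ℤ} (h1 : (p - i) % n = 0) (h2 : (a - i) % n = 0) :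
    (p - a) % n = 0 := by
  have d1 := Int.dvd_of_emod_eq_zero h1
  have d2 := Int.dvd_of_emod_eq_zero h2
  have h3 : p - a = (p - i) - (a - i) := by ring
  rw [h3]
  exact Int.emod_eq_zero_of_dvd (dvd_sub d1 d2)

lemma mod_ne_of {n c : ℤ} (hn : 2 ≤ n) (hc1 : c = 1 ∨ c = -1) (h : c % n = 0) : False := by
  have hd := Int.dvd_of_emod_eq_zero h
  have h1 : n ∣ 1 := by
    rcases hc1 with rfl | rfl
    · exact hd
    · exact (dvd_neg).mp hd
  have := Int.le_of_dvd one_pos h1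
  omega

lemma gap_ge {n p a : ℤ} (hn : 2 ≤ n) (h : (p - a) % n = 0) (hlt : a < p) :
    a + n ≤ p := by
  obtain ⟨k, hk⟩ := Int.dvd_of_emod_eq_zero h
  have hk0 : 0 < k := by nlinarith
  nlinarith

lemma mdRem_single (a : ℤ) (γ : MayaDiagram) :
    (mdRem {a} γ).beads = remB a γ.beads := by
  funext k
  rw [mdRem_beads, remB_apply]
  simp only [Finset.mem_singleton]
  by_cases h2 : k = a
  · rw [if_pos h2, if_neg (show ¬(k = a + 1) by omega), if_pos h2]
  · rw [if_neg h2]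
    by_cases h1 : k = a + 1
    · subst h1
      rw [if_pos (show a + 1 - 1 = a by ring), if_pos rfl]
    · rw [if_neg (show ¬(k - 1 = a) by omega), if_neg h1, if_neg h2]

lemma mdRem_single_beads_ne (a : ℤ) (γ : MayaDiagram) {k : ℤ}
    (h1 : k ≠ a) (h2 : k ≠ a + 1) :
    (mdRem {a} γ).beads k = γ.beads k := by
  rw [mdRem_beads]
  simp only [Finset.mem_singleton]
  rw [if_neg h1, if_neg (show ¬(k - 1 = a) by omega)]

lemma isleast_union_add {S₁ S₂ : Set ℤ} {x y c : ℤ}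
    (h1 : IsLeast S₁ x) (h2 : IsLeast S₂ y) :
    IsLeast (S₁ ∪ (fun v => v + c) '' S₂) (min x (y + c)) := by
  constructor
  · rcases le_total x (y + c) with h | h
    · rw [min_eq_left h]
      exact Or.inl h1.1
    · rw [min_eq_right h]
      exact Or.inr ⟨y, h2.1, rfl⟩
  · rintro v (hv | ⟨w, hw, rfl⟩)
    · exact le_trans (min_le_left _ _) (h1.2 hv)
    · show min x (y + c) ≤ w + c
      have := h2.2 hw
      have := min_le_right x (y + c)
      omega

lemma main_induction {n : ℤ} (hn : 2 ≤ n) {M : MayaDiagram → ℤ} (hM : PreNSS M)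
    (hper : PeriodicNSS n M) (i : ℤ) :
    ∀ l : List ℤ, l.Pairwise (· < ·) → (∀ p ∈ l, (p - i) % n = 0) →
      PreNSS (applyAll l M) ∧
      (∀ τ : RBMaya, (∀ p ∈ l, ¬(τ.beads p = true ∧ τ.beads (p+1) = false)) →
          Theta (applyAll l M) τ = Theta M τ) ∧
      (∀ γ : MayaDiagram, IsLeast
        {v : ℤ | ∃ R : Finset ℤ,
          (∀ j ∈ R, j ∈ l ∧ γ.beads j = true ∧ γ.beads (j+1) = false) ∧
          v = M (mdRem R γ) + R.card * cnss i M}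
        (applyAll l M γ)) := by
  intro l
  induction l with
  | nil =>
    intro _ _
    refine ⟨hM, fun τ _ => rfl, fun γ => ?_⟩
    constructor
    · refine ⟨∅, fun j hj => absurd hj (Finset.notMem_empty j), ?_⟩
      rw [mdRem_empty]
      simp [applyAll]
    · rintro v ⟨R, hR, rfl⟩
      have hRe : R = ∅ :=
        Finset.eq_empty_of_forall_notMem (fun j hj => List.not_mem_nil (hR j hj).1)
      subst hRe
      rw [mdRem_empty]
      simp [applyAll]
  | cons a t ih =>
    intro hsort hmod
    have hsc := List.pairwise_cons.mp hsort
    have hat : ∀ p ∈ t, a < p := hsc.1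
    have hsort' : t.Pairwise (· < ·) := hsc.2
    have hmod' : ∀ p ∈ t, (p - i) % n = 0 := fun p hp => hmod p (List.mem_cons_of_mem a hp)
    have hamod : (a - i) % n = 0 := hmod a (List.mem_cons_self)
    obtain ⟨hpre, hth, hval⟩ := ih hsort' hmod'
    set N := applyAll t M with hNdef
    have happ : applyAll (a :: t) M = ftil a N := rfl
    have hgap : ∀ p ∈ t, a + n ≤ p := fun p hp =>
      gap_ge hn (mod_sub (hmod' p hp) hamod) (hat p hp)
    have hLam : Theta N (Lam a) = Theta M (Lam a) := by
      apply hth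
      intro p hp hcon
      have h1 : p < a := of_decide_eq_true hcon.1
      have h2 := hat p hp
      omega
    have hsLam : Theta N (sLam a) = Theta M (sLam a) := by
      apply hth
      intro p hp hcon
      have h1 : p < a - 1 ∨ p = a := of_decide_eq_true hcon.1
      have h2 : ¬(p + 1 < a - 1 ∨ p + 1 = a) := of_decide_eq_false hcon.2
      have h3 := hat p hp
      omega
    have hcn : cnss a N = cnss i M := by
      have h1 : cnss a N = cnss a M := by rw [cnss, cnss, hLam, hsLam]
      rw [h1]
      exact cnss_mod hM hper hamod
    obtain ⟨hpre', hth', hthr'⟩ := ftil_preNSS hpre a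
    rw [happ]
    refine ⟨hpre', ?_, ?_⟩
    · intro τ hτ
      exact (hth' τ (hτ a (List.mem_cons_self))).trans
        (hth τ (fun p hp => hτ p (List.mem_cons_of_mem a hp)))
    · intro γ
      by_cases hrem : γ.beads a = true ∧ γ.beads (a+1) = false
      · -- removable at a
        set μa := mdRem {a} γ with hμadef
        have hra : RemoveAt γ μa a := ⟨hrem.1, hrem.2, mdRem_single a γ⟩
        have hfa : ftil a N γ = min (N γ) ((N μa + cnss i M)) := by
          rw [ftil_eq_of_rem hra, hcn]
        have hbeads_t : ∀ j ∈ t, μa.beads j = γ.beads j ∧ μa.beads (j+1) = γ.beads (j+1) := by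
          intro j hj
          have h1 := hgap j hj
          exact ⟨mdRem_single_beads_ne a γ (by omega) (by omega),
            mdRem_single_beads_ne a γ (by omega) (by omega)⟩
        have hcompose : ∀ R : Finset ℤ, (∀ j ∈ R, j ∈ t) →
            mdRem R μa = mdRem (insert a R) γ ∧ a ∉ R := by
          intro R hR
          have haR : a ∉ R := fun hc => by have := hgap a (hR a hc); omega
          have ha1R : a + 1 ∉ R := fun hc => by have := hgap _ (hR _ hc); omega
          have ha2R : a - 1 ∉ R := fun hc => by have := hgap _ (hR _ hc); omega
          refine ⟨md_ext ?_, haR⟩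
          show remAll R (remAll {a} γ.beads) = remAll (insert a R) γ.beads
          exact remAll_remAll_single haR ha1R ha2R γ.beads
        have hsets : {v : ℤ | ∃ R : Finset ℤ,
              (∀ j ∈ R, j ∈ a :: t ∧ γ.beads j = true ∧ γ.beads (j+1) = false) ∧
              v = M (mdRem R γ) + R.card * cnss i M}
            = {v : ℤ | ∃ R : Finset ℤ,
                (∀ j ∈ R, j ∈ t ∧ γ.beads j = true ∧ γ.beads (j+1) = false) ∧
                v = M (mdRem R γ) + R.card * cnss i M}
              ∪ (fun v => v + cnss i M) '' {v : ℤ | ∃ R : Finset ℤ,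
                (∀ j ∈ R, j ∈ t ∧ μa.beads j = true ∧ μa.beads (j+1) = false) ∧
                v = M (mdRem R μa) + R.card * cnss i M} := by
          ext v
          simp only [Set.mem_setOf_eq, Set.mem_union, Set.mem_image]
          constructor
          · rintro ⟨R, hR, rfl⟩
            by_cases haR : a ∈ R
            · right
              set R' := R.erase a with hR'def
              have hmemt : ∀ j ∈ R', j ∈ t := by
                intro j hj
                have h1 := Finset.ne_of_mem_erase hj
                have h2 := (hR j (Finset.mem_of_mem_erase hj)).1
                rcases List.mem_cons.mp h2 with h3 | h3
                · exact absurd h3 h1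
                · exact h3
              have hins : insert a R' = R := Finset.insert_erase haR
              obtain ⟨hcomp, haR'⟩ := hcompose R' hmemt
              refine ⟨M (mdRem R' μa) + R'.card * cnss i M, ⟨R', ?_, rfl⟩, ?_⟩
              · intro j hj
                obtain ⟨hb1, hb2⟩ := hbeads_t j (hmemt j hj)
                obtain ⟨_, hc2, hc3⟩ := hR j (Finset.mem_of_mem_erase hj)
                exact ⟨hmemt j hj, hb1.trans hc2, hb2.trans hc3⟩
              · rw [hcomp, hins]
                have hcard : R.card = R'.card + 1 := by
                  rw [← hins, Finset.card_insert_of_notMem haR']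
                rw [hcard]
                push_cast
                ring
            · left
              refine ⟨R, ?_, rfl⟩
              intro j hj
              obtain ⟨h1, h2, h3⟩ := hR j hj
              rcases List.mem_cons.mp h1 with h4 | h4
              · exact absurd h4 (fun e => haR (e ▸ hj))
              · exact ⟨h4, h2, h3⟩
          · rintro (⟨R, hR, rfl⟩ | ⟨w, ⟨R, hR, rfl⟩, rfl⟩)
            · exact ⟨R, fun j hj => ⟨List.mem_cons_of_mem a (hR j hj).1,
                (hR j hj).2.1, (hR j hj).2.2⟩, rfl⟩
            · have hmemt : ∀ j ∈ R, j ∈ t := fun j hj => (hR j hj).1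
              obtain ⟨hcomp, haR⟩ := hcompose R hmemt
              refine ⟨insert a R, ?_, ?_⟩
              · intro j hj
                rcases Finset.mem_insert.mp hj with h4 | hj'
                · exact ⟨by rw [h4]; exact List.mem_cons_self,
                    by rw [h4]; exact hrem.1, by rw [h4]; exact hrem.2⟩
                · obtain ⟨hb1, hb2⟩ := hbeads_t j (hmemt j hj')
                  obtain ⟨_, hc2, hc3⟩ := hR j hj'
                  exact ⟨List.mem_cons_of_mem a (hmemt j hj'),
                    hb1.symm.trans hc2, hb2.symm.trans hc3⟩
              · rw [← hcomp, Finset.card_insert_of_notMem haR]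
                push_cast
                ring
        rw [hsets, hfa]
        exact isleast_union_add (hval γ) (hval μa)
      · -- not removable at a
        have hfa : ftil a N γ = N γ := ftil_eq_of_not hrem
        have hsets : {v : ℤ | ∃ R : Finset ℤ,
              (∀ j ∈ R, j ∈ a :: t ∧ γ.beads j = true ∧ γ.beads (j+1) = false) ∧
              v = M (mdRem R γ) + R.card * cnss i M}
            = {v : ℤ | ∃ R : Finset ℤ,
                (∀ j ∈ R, j ∈ t ∧ γ.beads j = true ∧ γ.beads (j+1) = false) ∧
                v = M (mdRem R γ) + R.card * cnss i M} := by
          ext v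
          simp only [Set.mem_setOf_eq]
          constructor
          · rintro ⟨R, hR, rfl⟩
            refine ⟨R, ?_, rfl⟩
            intro j hj
            obtain ⟨h1, h2, h3⟩ := hR j hj
            rcases List.mem_cons.mp h1 with h4 | h4
            · exact absurd ⟨h4 ▸ h2, h4 ▸ h3⟩ hrem
            · exact ⟨h4, h2, h3⟩
          · rintro ⟨R, hR, rfl⟩
            exact ⟨R, fun j hj => ⟨List.mem_cons_of_mem a (hR j hj).1,
              (hR j hj).2.1, (hR j hj).2.2⟩, rfl⟩
        rw [hsets, hfa]
        exact hval γ

lemma reach_of_finset {n i : ℤ} (hn : 2 ≤ n) :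
    ∀ (m : ℕ) (R : Finset ℤ) (γ : MayaDiagram), R.card = m →
      (∀ j ∈ R, (j - i) % n = 0 ∧ γ.beads j = true ∧ γ.beads (j+1) = false) →
      Relation.ReflTransGen (RemStep n i) γ (mdRem R γ) ∧
      mayaSize γ = mayaSize (mdRem R γ) + R.card := by
  intro m
  induction m with
  | zero =>
    intro R γ hc _
    rw [Finset.card_eq_zero] at hc
    subst hc
    rw [mdRem_empty]
    exact ⟨Relation.ReflTransGen.refl, by simp⟩
  | succ m ih =>
    intro R γ hc hR
    have hne : R.Nonempty := by
      rw [← Finset.card_pos, hc]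
      omega
    obtain ⟨a, ha⟩ := hne
    obtain ⟨hamod, hab, haw⟩ := hR a ha
    set R' := R.erase a with hR'def
    have haR' : a ∉ R' := Finset.notMem_erase a R
    have hins : insert a R' = R := Finset.insert_erase ha
    set μa := mdRem {a} γ with hμadef
    have hra : RemoveAt γ μa a := ⟨hab, haw, mdRem_single a γ⟩
    have hmodR' : ∀ j ∈ R', (j - i) % n = 0 := fun j hj =>
      (hR j (Finset.mem_of_mem_erase hj)).1
    have hne1 : a + 1 ∉ R' := by
      intro hc2
      have h1 := hmodR' _ hc2
      have h2 := mod_sub h1 hamod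
      rw [show a + 1 - a = (1 : ℤ) by ring] at h2
      exact mod_ne_of hn (Or.inl rfl) h2
    have hne2 : a - 1 ∉ R' := by
      intro hc2
      have h1 := hmodR' _ hc2
      have h2 := mod_sub h1 hamod
      rw [show a - 1 - a = (-1 : ℤ) by ring] at h2
      exact mod_ne_of hn (Or.inr rfl) h2
    have hbeads' : ∀ j ∈ R', μa.beads j = γ.beads j ∧ μa.beads (j+1) = γ.beads (j+1) := by
      intro j hj
      have hja : j ≠ a := Finset.ne_of_mem_erase hj
      have hj1 : j ≠ a + 1 := fun e => hne1 (e ▸ hj)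
      have hj2 : j + 1 ≠ a := fun e => hne2 (by
        have : j = a - 1 := by omega
        exact this ▸ hj)
      exact ⟨mdRem_single_beads_ne a γ hja hj1,
        mdRem_single_beads_ne a γ hj2 (by omega)⟩
    have hcomp : mdRem R' μa = mdRem R γ := by
      apply md_ext
      show remAll R' (remAll {a} γ.beads) = remAll R γ.beads
      rw [remAll_remAll_single haR' hne1 hne2, hins]
    have hR'cond : ∀ j ∈ R', (j - i) % n = 0 ∧ μa.beads j = true ∧ μa.beads (j+1) = false := by
      intro j hj
      obtain ⟨h1, h2⟩ := hbeads' j hj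
      obtain ⟨m1, m2, m3⟩ := hR j (Finset.mem_of_mem_erase hj)
      exact ⟨m1, h1.trans m2, h2.trans m3⟩
    have hcard' : R'.card = m := by
      have h4 := Finset.card_erase_of_mem ha
      rw [← hR'def] at h4
      have h5 : 1 ≤ R.card := Finset.card_pos.mpr ⟨a, ha⟩
      omega
    obtain ⟨hreach, hsize⟩ := ih R' μa hcard' hR'cond
    rw [hcomp] at hreach hsize
    refine ⟨Relation.ReflTransGen.head ⟨a, hamod, hra⟩ hreach, ?_⟩
    have h3 := removeAt_size hra
    omega

lemma finset_of_reach {n i : ℤ} (hn : 2 ≤ n) {γ μ : MayaDiagram}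
    (h : Relation.ReflTransGen (RemStep n i) γ μ) :
    ∃ R : Finset ℤ,
      (∀ j ∈ R, (j - i) % n = 0 ∧ γ.beads j = true ∧ γ.beads (j+1) = false) ∧
      μ = mdRem R γ ∧ mayaSize γ = mayaSize μ + R.card := by
  induction h with
  | refl =>
    exact ⟨∅, fun j hj => absurd hj (Finset.notMem_empty j), (mdRem_empty γ).symm, by simp⟩
  | tail hab hbc ih =>
    obtain ⟨R, hR, hbeq, hsize⟩ := ih
    obtain ⟨j, hjmod, hrem⟩ := hbc
    subst hbeq
    have hbj : (mdRem R γ).beads j = true := hrem.1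
    have hbj1 : (mdRem R γ).beads (j+1) = false := hrem.2.1
    have hjR : j ∉ R := fun hc => by
      rw [mdRem_beads, if_pos hc] at hbj
      cases hbj
    have hj1R : j - 1 ∉ R := by
      intro hc
      have h1 := (hR _ hc).1
      have h2 := mod_sub h1 hjmod
      rw [show j - 1 - j = (-1 : ℤ) by ring] at h2
      exact mod_ne_of hn (Or.inr rfl) h2
    have hj2R : j + 1 ∉ R := by
      intro hc
      have h1 := (hR _ hc).1
      have h2 := mod_sub h1 hjmod
      rw [show j + 1 - j = (1 : ℤ) by ring] at h2
      exact mod_ne_of hn (Or.inl rfl) h2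
    have hgj : γ.beads j = true := by
      rw [mdRem_beads, if_neg hjR, if_neg (show ¬(j - 1 ∈ R) from hj1R)] at hbj
      exact hbj
    have hgj1 : γ.beads (j+1) = false := by
      rw [mdRem_beads, if_neg hj2R,
        if_neg (show ¬(j + 1 - 1 ∈ R) by rw [show j + 1 - 1 = j by ring]; exact hjR)] at hbj1
      exact hbj1
    refine ⟨insert j R, ?_, ?_, ?_⟩
    · intro k hk
      rcases Finset.mem_insert.mp hk with rfl | hk'
      · exact ⟨hjmod, hgj, hgj1⟩
      · exact hR k hk'
    · apply md_ext
      rw [hrem.2.2]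
      exact remB_remAll hjR hj2R γ.beads
    · have h3 := removeAt_size hrem
      rw [Finset.card_insert_of_notMem hjR]
      omega

end Main

/-- for an n-periodic pre-NSS datum M and a residue i, the affine
operator f̂_i M = (∏_{k∈ℤ} f̃_{i+kn}) M is well-defined (the finite products over
the intervals [−K, K] stabilize on each diagram γ) and is given by the closed
formula (f̂_i M)_γ = min over μ obtained from γ by removing boxes of color i mod n
of ( M_μ + |γ∖μ|·(φ̂_i(M) − 1) ). -/
theorem fhat_welldefined_formula (n : ℤ) (hn : 2 ≤ n) (M : MayaDiagram → ℤ)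
    (hM : PreNSS M) (hper : PeriodicNSS n M) (i : ℤ) (γ : MayaDiagram) :
    ∃ K₀ : ℕ, ∀ K : ℕ, K₀ ≤ K →
      IsLeast {v : ℤ | ∃ μ : MayaDiagram,
          Relation.ReflTransGen (RemStep n i) γ μ ∧
          v = M μ + ((mayaSize γ : ℤ) - (mayaSize μ : ℤ)) * (phihat n i M - 1)}
        (applyAll (((Finset.Icc (-(K : ℤ)) (K : ℤ)).sort (· ≤ ·)).map
          (fun k => i + k * n)) M γ) := by
  obtain ⟨N₁, hN₁⟩ := γ.black_up
  obtain ⟨N₀, hN₀⟩ := γ.white_down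
  refine ⟨(|N₀| + |N₁| + |i| + 1).toNat, fun K hK => ?_⟩
  set l := ((Finset.Icc (-(K:ℤ)) (K:ℤ)).sort (· ≤ ·)).map (fun k => i + k * n) with hl
  have hsort : l.Pairwise (· < ·) := by
    have hs := (Finset.sortedLT_sort (Finset.Icc (-(K:ℤ)) (K:ℤ))).pairwise
    exact List.Pairwise.map _ (fun a b hab => by
      have h1 : a * n < b * n := by
        apply mul_lt_mul_of_pos_right hab
        omega
      linarith) hs
  have hmod : ∀ p ∈ l, (p - i) % n = 0 := by
    intro p hp
    rw [hl, List.mem_map] at hp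
    obtain ⟨k, _, rfl⟩ := hp
    rw [show i + k * n - i = k * n by ring]
    exact Int.mul_emod_left k n
  obtain ⟨hpre, hth, hval⟩ := main_induction hn hM hper i l hsort hmod
  have hmem : ∀ j : ℤ, (j - i) % n = 0 → γ.beads j = true → γ.beads (j+1) = false →
      j ∈ l := by
    intro j hjm hjb hjw
    obtain ⟨k, hk⟩ := emod_sub_decompose hjm
    have hj0 : N₀ < j := by
      by_contra hcon
      push_neg at hcon
      rw [hN₀ j hcon] at hjb
      cases hjb
    have hj1 : j + 1 < N₁ := by
      by_contra hcon
      push_neg at hcon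
      rw [hN₁ (j+1) hcon] at hjw
      cases hjw
    have e1 : -|N₀| ≤ N₀ := neg_abs_le N₀
    have e2 : N₁ ≤ |N₁| := le_abs_self N₁
    have e0 : 0 ≤ |N₀| := abs_nonneg N₀
    have e0' : 0 ≤ |N₁| := abs_nonneg N₁
    have e0'' : 0 ≤ |i| := abs_nonneg i
    have hjabs : |j| ≤ |N₀| + |N₁| := abs_le.mpr ⟨by omega, by omega⟩
    have h4 : k * n = j - i := by linarith [hk]
    have h5 : |k * n| ≤ |j| + |i| := by
      rw [h4, sub_eq_add_neg]
      exact (abs_add_le j (-i)).trans_eq (by rw [abs_neg])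
    have h6 : |k| * 1 ≤ |k| * n := by
      apply mul_le_mul_of_nonneg_left (by omega) (abs_nonneg k)
    have h7 : |k * n| = |k| * n := by
      rw [abs_mul, abs_of_nonneg (show (0:ℤ) ≤ n by omega)]
    have h8 : |k| ≤ |N₀| + |N₁| + |i| := by linarith
    have hKB : (|N₀| + |N₁| + |i| + 1 : ℤ) ≤ (K:ℤ) := by omega
    have hkK : -(K:ℤ) ≤ k ∧ k ≤ (K:ℤ) := by
      have l1 := neg_abs_le k
      have l2 := le_abs_self k
      constructor <;> omega
    rw [hl, List.mem_map]
    refine ⟨k, ?_, hk.symm⟩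
    rw [Finset.mem_sort]
    exact Finset.mem_Icc.mpr ⟨hkK.1, hkK.2⟩
  have hphi : phihat n i M - 1 = cnss i M := (cnss_phihat hM hper hn).symm
  have hsets : {v : ℤ | ∃ μ : MayaDiagram,
        Relation.ReflTransGen (RemStep n i) γ μ ∧
        v = M μ + ((mayaSize γ : ℤ) - (mayaSize μ : ℤ)) * (phihat n i M - 1)}
      = {v : ℤ | ∃ R : Finset ℤ,
          (∀ j ∈ R, j ∈ l ∧ γ.beads j = true ∧ γ.beads (j+1) = false) ∧
          v = M (mdRem R γ) + R.card * cnss i M} := by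
    ext v
    simp only [Set.mem_setOf_eq]
    constructor
    · rintro ⟨μ, hreach, rfl⟩
      obtain ⟨R, hR, hmu, hsz⟩ := finset_of_reach hn hreach
      subst hmu
      refine ⟨R, ?_, ?_⟩
      · intro j hj
        obtain ⟨h1, h2, h3⟩ := hR j hj
        exact ⟨hmem j h1 h2 h3, h2, h3⟩
      · rw [hphi]
        congr 1
        rw [show ((mayaSize γ : ℤ) - (mayaSize (mdRem R γ) : ℤ)) = (R.card : ℤ) by omega]
    · rintro ⟨R, hR, rfl⟩
      have hcond : ∀ j ∈ R, (j - i) % n = 0 ∧ γ.beads j = true ∧ γ.beads (j+1) = false :=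
        fun j hj => ⟨hmod j (hR j hj).1, (hR j hj).2.1, (hR j hj).2.2⟩
      obtain ⟨hreach, hsz⟩ := reach_of_finset hn R.card R γ rfl hcond
      refine ⟨mdRem R γ, hreach, ?_⟩
      rw [hphi]
      congr 1
      rw [show ((mayaSize γ : ℤ) - (mayaSize (mdRem R γ) : ℤ)) = (R.card : ℤ) by omega]
  rw [hsets]
  exact hval γ
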